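/- arXiv:2511.02934 — 2 statements merged into one kernel-verified Lean document; each statement's English description precedes it below -/
import Mathlib

section
/- Let d ≥ 2, r ∈ (0,1], and v ∈ ℝ^d (Euclidean space). Then ∫_{S^{d−1}} |⟨v,ω⟩| (‖v − (1+r)⟨v,ω⟩ω‖² − ‖v‖²) dσ(ω) = −(1−r²)·‖v‖³·∫_{S^{d−1}} |⟨e₁,ω⟩|³ dσ(ω), where σ is the surface measure on the unit sphere S^{d−1} and e₁ is the first standard basis vector. (This is the dissipation identity for the second velocity moment underlying the decay of kinetic energy for the inelastic linear Boltzmann equation.) -/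
open MeasureTheory Metric
open scoped RealInnerProductSpace Pointwise

/-- A linear isometry equivalence of `ℝ^d` restricts to a homeomorphism of the unit sphere. -/
noncomputable def sphereHomeo (d : ℕ)
    (e : EuclideanSpace ℝ (Fin d) ≃ₗᵢ[ℝ] EuclideanSpace ℝ (Fin d)) :
    sphere (0 : EuclideanSpace ℝ (Fin d)) 1 ≃ₜ sphere (0 : EuclideanSpace ℝ (Fin d)) 1 where
  toFun ω := ⟨e ω, mem_sphere_zero_iff_norm.2 (by
    rw [e.norm_map]; exact mem_sphere_zero_iff_norm.1 ω.2)⟩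
  invFun ω := ⟨e.symm ω, mem_sphere_zero_iff_norm.2 (by
    rw [e.symm.norm_map]; exact mem_sphere_zero_iff_norm.1 ω.2)⟩
  left_inv ω := Subtype.ext (e.symm_apply_apply ω)
  right_inv ω := Subtype.ext (e.apply_symm_apply ω)
  continuous_toFun := Continuous.subtype_mk (e.continuous.comp continuous_subtype_val) _
  continuous_invFun := Continuous.subtype_mk (e.symm.continuous.comp continuous_subtype_val) _

/-- The restriction to the sphere as a measurable equivalence. -/
noncomputable def sphereMapE (d : ℕ)
    (e : EuclideanSpace ℝ (Fin d) ≃ₗᵢ[ℝ] EuclideanSpace ℝ (Fin d)) :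
    sphere (0 : EuclideanSpace ℝ (Fin d)) 1 ≃ᵐ sphere (0 : EuclideanSpace ℝ (Fin d)) 1 :=
  (sphereHomeo d e).toMeasurableEquiv

@[simp] lemma sphereMapE_coe (d : ℕ)
    (e : EuclideanSpace ℝ (Fin d) ≃ₗᵢ[ℝ] EuclideanSpace ℝ (Fin d))
    (ω : sphere (0 : EuclideanSpace ℝ (Fin d)) 1) :
    ((sphereMapE d e ω : sphere (0 : EuclideanSpace ℝ (Fin d)) 1) :
      EuclideanSpace ℝ (Fin d)) = e ω := rfl

lemma sphereMapE_preserving (d : ℕ)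
    (e : EuclideanSpace ℝ (Fin d) ≃ₗᵢ[ℝ] EuclideanSpace ℝ (Fin d)) :
    MeasurePreserving (sphereMapE d e)
      (volume : Measure (EuclideanSpace ℝ (Fin d))).toSphere
      (volume : Measure (EuclideanSpace ℝ (Fin d))).toSphere := by
  refine ⟨(sphereMapE d e).measurable, ?_⟩
  ext s hs
  rw [Measure.map_apply (sphereMapE d e).measurable hs,
    Measure.toSphere_apply' _ ((sphereMapE d e).measurable hs),
    Measure.toSphere_apply' _ hs]
  congr 1
  have h1 : (Subtype.val '' (sphereMapE d e ⁻¹' s)) = e ⁻¹' (Subtype.val '' s) := by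
    ext x
    constructor
    · rintro ⟨ω, hω, rfl⟩
      exact ⟨sphereMapE d e ω, hω, rfl⟩
    · rintro ⟨ω, hω, hx⟩
      have hxs : x ∈ sphere (0 : EuclideanSpace ℝ (Fin d)) 1 := by
        have hn : ‖e x‖ = ‖x‖ := e.norm_map x
        have h1 : ‖(ω : EuclideanSpace ℝ (Fin d))‖ = 1 := mem_sphere_zero_iff_norm.1 ω.2
        rw [mem_sphere_zero_iff_norm, ← hn, ← hx]; exact h1
      refine ⟨⟨x, hxs⟩, ?_, rfl⟩
      show sphereMapE d e ⟨x, hxs⟩ ∈ s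
      have : sphereMapE d e ⟨x, hxs⟩ = ω := Subtype.ext hx.symm
      rw [this]; exact hω
  have h2 : Set.Ioo (0:ℝ) 1 • (e ⁻¹' (Subtype.val '' s))
      = e ⁻¹' (Set.Ioo (0:ℝ) 1 • (Subtype.val '' s)) := by
    ext x
    constructor
    · rintro ⟨c, hc, y, hy, rfl⟩
      exact ⟨c, hc, e y, hy, (e.map_smul c y).symm⟩
    · rintro ⟨c, hc, y, hy, hx⟩
      refine ⟨c, hc, e.symm y, by simpa using hy, ?_⟩
      apply e.injective
      rw [e.map_smul, e.apply_symm_apply]; exact hx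
  rw [h1, h2]
  calc volume (e ⁻¹' (Set.Ioo (0:ℝ) 1 • (Subtype.val '' s)))
      = Measure.map e.toMeasurableEquiv volume (Set.Ioo (0:ℝ) 1 • (Subtype.val '' s)) := by
        rw [MeasurableEquiv.map_apply]; rfl
    _ = volume (Set.Ioo (0:ℝ) 1 • (Subtype.val '' s)) := by
        rw [e.coe_toMeasurableEquiv, e.measurePreserving.map_eq]

lemma integral_sphere_isometry (d : ℕ)
    (e : EuclideanSpace ℝ (Fin d) ≃ₗᵢ[ℝ] EuclideanSpace ℝ (Fin d))
    (f : EuclideanSpace ℝ (Fin d) → ℝ) :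
    (∫ ω : sphere (0 : EuclideanSpace ℝ (Fin d)) 1, f (e ω)
        ∂(volume : Measure (EuclideanSpace ℝ (Fin d))).toSphere)
      = ∫ ω : sphere (0 : EuclideanSpace ℝ (Fin d)) 1, f ω
        ∂(volume : Measure (EuclideanSpace ℝ (Fin d))).toSphere :=
  (sphereMapE_preserving d e).integral_comp (sphereMapE d e).measurableEmbedding
    (fun ω => f (ω : EuclideanSpace ℝ (Fin d)))
/-- The surface measure on the unit sphere of `ℝ^d`. -/
noncomputable def sphereSurfaceMeasure (d : ℕ) :
    Measure (sphere (0 : EuclideanSpace ℝ (Fin d)) 1) :=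
  (volume : Measure (EuclideanSpace ℝ (Fin d))).toSphere

/-- Dissipation identity for the second velocity moment of the inelastic linear Boltzmann
equation: `∫_{S^{d−1}} |⟪v,ω⟫| (‖v−(1+r)⟪v,ω⟫ω‖² − ‖v‖²) dσ(ω)
  = −(1−r²)·‖v‖³·∫_{S^{d−1}} |⟪e₁,ω⟫|³ dσ(ω)`. -/
theorem inelastic_energy_dissipation_identity (d : ℕ) (hd : 2 ≤ d) (r : ℝ)
    (hr : r ∈ Set.Ioc (0 : ℝ) 1) (v : EuclideanSpace ℝ (Fin d)) :
    (∫ ω : sphere (0 : EuclideanSpace ℝ (Fin d)) 1,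
        |⟪v, (ω : EuclideanSpace ℝ (Fin d))⟫| *
          (‖v - ((1 + r) * ⟪v, (ω : EuclideanSpace ℝ (Fin d))⟫) •
              (ω : EuclideanSpace ℝ (Fin d))‖ ^ 2 - ‖v‖ ^ 2) ∂ sphereSurfaceMeasure d)
      = -(1 - r ^ 2) * ‖v‖ ^ 3 *
          ∫ ω : sphere (0 : EuclideanSpace ℝ (Fin d)) 1,
            |⟪(EuclideanSpace.single (⟨0, by omega⟩ : Fin d) (1 : ℝ)),
              (ω : EuclideanSpace ℝ (Fin d))⟫| ^ 3 ∂ sphereSurfaceMeasure d := by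
  set E1 : EuclideanSpace ℝ (Fin d) :=
    EuclideanSpace.single (⟨0, by omega⟩ : Fin d) (1 : ℝ) with hE1
  have key : ∀ ω : sphere (0 : EuclideanSpace ℝ (Fin d)) 1,
      |⟪v, (ω : EuclideanSpace ℝ (Fin d))⟫| *
          (‖v - ((1 + r) * ⟪v, (ω : EuclideanSpace ℝ (Fin d))⟫) •
              (ω : EuclideanSpace ℝ (Fin d))‖ ^ 2 - ‖v‖ ^ 2)
        = -(1 - r ^ 2) * |⟪v, (ω : EuclideanSpace ℝ (Fin d))⟫| ^ 3 := by
    intro ω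
    have hω : ‖(ω : EuclideanSpace ℝ (Fin d))‖ = 1 := mem_sphere_zero_iff_norm.1 ω.2
    set t := ⟪v, (ω : EuclideanSpace ℝ (Fin d))⟫ with ht
    have hexp : ‖v - ((1 + r) * t) • (ω : EuclideanSpace ℝ (Fin d))‖ ^ 2
        = ‖v‖ ^ 2 - 2 * ((1 + r) * t) * t + ((1 + r) * t) ^ 2 := by
      rw [@norm_sub_sq_real, real_inner_smul_right, norm_smul, Real.norm_eq_abs, hω, mul_one,
        sq_abs, ← ht]; ring
    have habs : |t| ^ 3 = |t| * t ^ 2 := by rw [← sq_abs]; ring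
    rw [hexp, habs]; ring
  rw [integral_congr_ae (Filter.Eventually.of_forall key)]
  simp only [neg_mul]
  rw [integral_neg, integral_const_mul]
  suffices h : (∫ ω : sphere (0 : EuclideanSpace ℝ (Fin d)) 1,
      |⟪v, (ω : EuclideanSpace ℝ (Fin d))⟫| ^ 3 ∂ sphereSurfaceMeasure d)
      = ‖v‖ ^ 3 * ∫ ω : sphere (0 : EuclideanSpace ℝ (Fin d)) 1,
          |⟪E1, (ω : EuclideanSpace ℝ (Fin d))⟫| ^ 3 ∂ sphereSurfaceMeasure d by
    rw [h]; ring
  by_cases hv : v = 0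
  · simp [hv]
  · set u : EuclideanSpace ℝ (Fin d) := ‖v‖⁻¹ • v with hudef
    have hu : ‖u‖ = 1 := norm_smul_inv_norm hv
    have hvu : v = ‖v‖ • u := by
      rw [hudef, smul_smul, mul_inv_cancel₀ (norm_ne_zero_iff.2 hv), one_smul]
    have h2 : ∀ ω : sphere (0 : EuclideanSpace ℝ (Fin d)) 1,
        |⟪v, (ω : EuclideanSpace ℝ (Fin d))⟫| ^ 3
          = ‖v‖ ^ 3 * |⟪u, (ω : EuclideanSpace ℝ (Fin d))⟫| ^ 3 := by
      intro ω
      conv_lhs => rw [hvu]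
      rw [real_inner_smul_left, abs_mul, mul_pow, abs_norm]
    rw [integral_congr_ae (Filter.Eventually.of_forall h2), integral_const_mul]
    congr 1
    have hE1n : ‖E1‖ = 1 := by
      rw [hE1, EuclideanSpace.norm_single, norm_one]
    set e := Submodule.reflection (ℝ ∙ (E1 - u))ᗮ with he_def
    have he : e E1 = u := Submodule.reflection_sub (by rw [hE1n, hu])
    have hiso := integral_sphere_isometry d e (fun x => |⟪u, x⟫| ^ 3)
    show (∫ ω : sphere (0 : EuclideanSpace ℝ (Fin d)) 1,
        |⟪u, (ω : EuclideanSpace ℝ (Fin d))⟫| ^ 3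
          ∂ (volume : Measure (EuclideanSpace ℝ (Fin d))).toSphere) = _
    rw [← hiso]
    refine integral_congr_ae (Filter.Eventually.of_forall fun ω => ?_)
    show |⟪u, (e (ω : EuclideanSpace ℝ (Fin d)))⟫| ^ 3
        = |⟪E1, (ω : EuclideanSpace ℝ (Fin d))⟫| ^ 3
    rw [← he, e.inner_map_map]
end

section
/- Let d ≥ 2 and r ∈ (0,1). There exist constants δ₀ > 0 and C > 0, depending only on d and r, with the following property: for every v ∈ ℝ^d with v ≠ 0, every unit vector p ∈ S^{d−1}, and every δ with 0 < δ ≤ δ₀, there exists a measurable subset P ⊆ S^{d−1} with σ(P) ≤ C·δ^{1/2} such that every unit vector ω ∈ S^{d−1} satisfying 1 − |⟨κ_ω(v)/‖κ_ω(v)‖, p⟩| ≤ δ belongs to P. (Almost colinearity after scattering: the post-collisional velocity κ_ω(v) is almost colinear to p only for angular parameters ω in a set of spherical measure at most C·δ^{1/2}.) -/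
open MeasureTheory Metric
open scoped RealInnerProductSpace Pointwise ENNReal

/-- The inelastic scattering map `κ_ω(v) = v − (1+r)⟪v,ω⟫ω`. -/
noncomputable def inelasticScatter (d : ℕ) (r : ℝ) (ω v : EuclideanSpace ℝ (Fin d)) :
    EuclideanSpace ℝ (Fin d) :=
  v - ((1 + r) * ⟪v, ω⟫) • ω

lemma slab_measure_bound (d : ℕ) (hd : 0 < d) (e : EuclideanSpace ℝ (Fin d)) (he : ‖e‖ = 1)
    (w : ℝ) (hw : 0 ≤ w) :
    sphereSurfaceMeasure d {ω : sphere (0 : EuclideanSpace ℝ (Fin d)) 1 |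
        |⟪e, (ω : EuclideanSpace ℝ (Fin d))⟫| ≤ w} ≤
      ENNReal.ofReal ((d : ℝ) * 2 ^ d * w) := by
  classical
  set s : Set (sphere (0 : EuclideanSpace ℝ (Fin d)) 1) := {ω | |⟪e, (ω : EuclideanSpace ℝ (Fin d))⟫| ≤ w} with hs_def
  have hclosed : IsClosed {x : EuclideanSpace ℝ (Fin d) | |⟪e, x⟫| ≤ w} :=
    isClosed_le (Continuous.abs (continuous_const.inner continuous_id)) continuous_const
  have hms : MeasurableSet s := by
    have : s = ((↑) : sphere (0 : EuclideanSpace ℝ (Fin d)) 1 → EuclideanSpace ℝ (Fin d)) ⁻¹' {x : EuclideanSpace ℝ (Fin d) | |⟪e, x⟫| ≤ w} := rfl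
    rw [this]
    exact hclosed.measurableSet.preimage measurable_subtype_coe
  -- orthonormal basis with b i₀ = e
  obtain ⟨b, hb⟩ : ∃ b : OrthonormalBasis (Fin d) ℝ (EuclideanSpace ℝ (Fin d)), ∀ i ∈ ({⟨0, hd⟩} : Set (Fin d)), b i = e := by
    have hcard : Module.finrank ℝ (EuclideanSpace ℝ (Fin d)) = Fintype.card (Fin d) := by
      simp [finrank_euclideanSpace_fin]
    refine Orthonormal.exists_orthonormalBasis_extension_of_card_eq hcard
      (v := fun _ => e) (s := {⟨0, hd⟩}) ?_
    constructor
    · intro i; simpa using he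
    · intro i j hij
      exact absurd (Subtype.ext (i.2.trans j.2.symm)) hij
  have hbi : b ⟨0, hd⟩ = e := hb _ rfl
  set i₀ : Fin d := ⟨0, hd⟩
  set W : Fin d → ℝ := fun i => if i = i₀ then w else 1 with hW
  have hWnn : ∀ i, 0 ≤ W i := by
    intro i; by_cases h : i = i₀ <;> simp [hW, h, hw]
  -- the box in (Fin d → ℝ)
  set I : Fin d → Set ℝ := fun i => Set.Icc (-(W i)) (W i) with hI
  have hIbox : MeasurableSet (Set.pi Set.univ I) :=
    MeasurableSet.univ_pi fun i => measurableSet_Icc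
  -- main subset claim
  have hsub : Set.Ioo (0 : ℝ) 1 • (((↑) : sphere (0 : EuclideanSpace ℝ (Fin d)) 1 → EuclideanSpace ℝ (Fin d)) '' s) ⊆
      (fun x : EuclideanSpace ℝ (Fin d) => (MeasurableEquiv.toLp 2 (Fin d → ℝ)).symm (b.repr x)) ⁻¹'
        (Set.pi Set.univ I) := by
    rintro z hz
    rw [Set.mem_smul] at hz
    obtain ⟨c, hc, x, hx, rfl⟩ := hz
    obtain ⟨ω, hω, rfl⟩ := hx
    have hωs : ‖(ω : EuclideanSpace ℝ (Fin d))‖ = 1 := by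
      have := ω.2
      simpa [mem_sphere_iff_norm] using this
    intro i _
    have hrepr : b.repr (c • (ω : EuclideanSpace ℝ (Fin d))) i = ⟪b i, c • (ω : EuclideanSpace ℝ (Fin d))⟫ := b.repr_apply_apply _ _
    have hnorm : |b.repr (c • (ω : EuclideanSpace ℝ (Fin d))) i| ≤ c := by
      rw [hrepr]
      calc |⟪b i, c • (ω : EuclideanSpace ℝ (Fin d))⟫| ≤ ‖b i‖ * ‖c • (ω : EuclideanSpace ℝ (Fin d))‖ := abs_real_inner_le_norm _ _
        _ = c := by
          rw [b.orthonormal.1 i, norm_smul, hωs]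
          simp [abs_of_pos hc.1]
    have hle1 : |b.repr (c • (ω : EuclideanSpace ℝ (Fin d))) i| ≤ 1 := hnorm.trans hc.2.le
    by_cases h : i = i₀
    · subst h
      have : b.repr (c • (ω : EuclideanSpace ℝ (Fin d))) i₀ = c * ⟪e, (ω : EuclideanSpace ℝ (Fin d))⟫ := by
        rw [hrepr, hbi, real_inner_smul_right]
      have habs : |b.repr (c • (ω : EuclideanSpace ℝ (Fin d))) i₀| ≤ w := by
        rw [this, abs_mul, abs_of_pos hc.1]
        calc c * |⟪e, (ω : EuclideanSpace ℝ (Fin d))⟫| ≤ 1 * w := by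
              apply mul_le_mul hc.2.le hω (abs_nonneg _) zero_le_one
          _ = w := one_mul w
      simpa [I, W, Set.mem_Icc, abs_le] using abs_le.1 habs
    · simpa [I, W, h, Set.mem_Icc, abs_le] using abs_le.1 hle1
  -- measure computation
  have happly := (volume : Measure (EuclideanSpace ℝ (Fin d))).toSphere_apply' hms
  have hdim : Module.finrank ℝ (EuclideanSpace ℝ (Fin d)) = d := finrank_euclideanSpace_fin
  rw [sphereSurfaceMeasure, happly, hdim]
  have hvol : volume (Set.Ioo (0 : ℝ) 1 • (((↑) : sphere (0 : EuclideanSpace ℝ (Fin d)) 1 → EuclideanSpace ℝ (Fin d)) '' s)) ≤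
      ENNReal.ofReal (2 ^ d * w) := by
    refine le_trans (measure_mono hsub) ?_
    have hmp : MeasurePreserving
        (fun x : EuclideanSpace ℝ (Fin d) => (MeasurableEquiv.toLp 2 (Fin d → ℝ)).symm (b.repr x)) volume volume :=
      (EuclideanSpace.volume_preserving_symm_measurableEquiv_toLp (Fin d)).comp
        b.measurePreserving_repr
    rw [hmp.measure_preimage hIbox.nullMeasurableSet]
    rw [volume_pi_pi]
    have : ∀ i, volume (I i) = ENNReal.ofReal (2 * W i) := by
      intro i
      rw [hI]
      simp only [Real.volume_Icc]
      congr 1; ring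
    simp_rw [this]
    rw [← ENNReal.ofReal_prod_of_nonneg (fun i _ => by positivity)]
    apply ENNReal.ofReal_le_ofReal
    rw [Finset.prod_mul_distrib, Finset.prod_const]
    have : ∏ i, W i = w := by
      rw [hW]
      rw [Finset.prod_ite_eq' Finset.univ i₀ (fun _ => w)]
      simp
    rw [this]
    simp [Finset.card_univ]
  calc (d : ℝ≥0∞) * volume (Set.Ioo (0 : ℝ) 1 • (((↑) : sphere (0 : EuclideanSpace ℝ (Fin d)) 1 → EuclideanSpace ℝ (Fin d)) '' s))
      ≤ (d : ℝ≥0∞) * ENNReal.ofReal (2 ^ d * w) := by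
        exact mul_le_mul_right hvol _
    _ = ENNReal.ofReal ((d : ℝ) * 2 ^ d * w) := by
        rw [← ENNReal.ofReal_natCast d, ← ENNReal.ofReal_mul (by positivity)]
        ring_nf

lemma exists_unit_orthogonal (d : ℕ) (hd : 2 ≤ d) (p : EuclideanSpace ℝ (Fin d))
    (hp : ‖p‖ = 1) : ∃ q : EuclideanSpace ℝ (Fin d), ‖q‖ = 1 ∧ ⟪p, q⟫ = 0 := by
  have hpne : p ≠ 0 := by intro h; rw [h, norm_zero] at hp; norm_num at hp
  have : ∃ y : EuclideanSpace ℝ (Fin d), y - ⟪p, y⟫ • p ≠ 0 := by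
    by_contra h
    push_neg at h
    have hspan : ∀ y : EuclideanSpace ℝ (Fin d), y ∈ Submodule.span ℝ ({p} : Set _) := by
      intro y
      rw [Submodule.mem_span_singleton]
      exact ⟨⟪p, y⟫, by have := h y; rwa [sub_eq_zero, eq_comm] at this⟩
    have htop : Submodule.span ℝ ({p} : Set (EuclideanSpace ℝ (Fin d))) = ⊤ :=
      Submodule.eq_top_iff'.2 hspan
    have h1 : Module.finrank ℝ (Submodule.span ℝ ({p} : Set (EuclideanSpace ℝ (Fin d)))) = 1 :=
      finrank_span_singleton hpne
    rw [htop, finrank_top] at h1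
    rw [finrank_euclideanSpace_fin] at h1
    omega
  obtain ⟨y, hy⟩ := this
  refine ⟨‖y - ⟪p, y⟫ • p‖⁻¹ • (y - ⟪p, y⟫ • p), norm_smul_inv_norm hy, ?_⟩
  rw [real_inner_smul_right, inner_sub_right, real_inner_smul_right,
    real_inner_self_eq_norm_sq, hp]
  ring

lemma orth_norm_sq (d : ℕ) (p q : EuclideanSpace ℝ (Fin d)) (hp : ‖p‖ = 1) (hq : ‖q‖ = 1)
    (hpq : ⟪p, q⟫ = 0) (x y : ℝ) : ‖x • p + y • q‖ ^ 2 = x ^ 2 + y ^ 2 := by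
  rw [norm_add_sq_real, norm_smul, norm_smul, real_inner_smul_left, real_inner_smul_right,
    hpq, hp, hq, Real.norm_eq_abs, Real.norm_eq_abs, mul_one, mul_one, sq_abs, sq_abs]
  ring

/-- Orthogonal decomposition of a unit vector w.r.t. a unit vector `p`. -/
lemma exists_orth_decomp (d : ℕ) (hd : 2 ≤ d) (u p : EuclideanSpace ℝ (Fin d))
    (hu : ‖u‖ = 1) (hp : ‖p‖ = 1) :
    ∃ (q : EuclideanSpace ℝ (Fin d)) (b : ℝ), ‖q‖ = 1 ∧ 0 ≤ b ∧ ⟪p, q⟫ = 0 ∧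
      u = ⟪u, p⟫ • p + b • q ∧ ⟪u, p⟫ ^ 2 + b ^ 2 = 1 := by
  set a := ⟪u, p⟫ with ha_def
  have key : ∀ q : EuclideanSpace ℝ (Fin d), ‖q‖ = 1 → ⟪p, q⟫ = 0 →
      ∀ b : ℝ, u = a • p + b • q → a ^ 2 + b ^ 2 = 1 := by
    intro q hq hpq b huq
    have h1 : ‖u‖ ^ 2 = a ^ 2 + b ^ 2 := by
      rw [huq]; exact orth_norm_sq d p q hp hq hpq a b
    rw [hu] at h1; nlinarith
  by_cases hbz : ‖u - a • p‖ = 0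
  · obtain ⟨q, hq1, hq2⟩ := exists_unit_orthogonal d hd p hp
    have h0 : u - a • p = 0 := norm_eq_zero.1 hbz
    have huq : u = a • p + (0 : ℝ) • q := by
      rw [zero_smul, add_zero, ← sub_eq_zero]; exact h0
    exact ⟨q, 0, hq1, le_refl 0, hq2, huq, key q hq1 hq2 0 huq⟩
  · set w := u - a • p with hw_def
    have hnq : ‖(‖w‖⁻¹ • w : EuclideanSpace ℝ (Fin d))‖ = 1 := by
      rw [norm_smul, Real.norm_eq_abs, abs_of_nonneg (inv_nonneg.2 (norm_nonneg w)),
        inv_mul_cancel₀ hbz]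
    have hpq : ⟪p, ‖w‖⁻¹ • w⟫ = 0 := by
      rw [real_inner_smul_right, hw_def, inner_sub_right, real_inner_smul_right,
        real_inner_self_eq_norm_sq, hp, real_inner_comm, ← ha_def]
      ring
    have huq : u = a • p + ‖w‖ • (‖w‖⁻¹ • w) := by
      rw [smul_smul, mul_inv_cancel₀ hbz, one_smul, hw_def]
      abel
    exact ⟨_, _, hnq, norm_nonneg w, hpq, huq, key _ hnq hpq _ huq⟩

/-- half-angle square root on the unit circle -/
lemma exists_circle_sqrt (z1 z2 : ℝ) (h : z1 ^ 2 + z2 ^ 2 = 1) :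
    ∃ x y : ℝ, x ^ 2 + y ^ 2 = 1 ∧ x ^ 2 - y ^ 2 = z1 ∧ 2 * x * y = z2 := by
  have hz1 : |z1| ≤ 1 := by nlinarith [abs_nonneg z1, sq_abs z1, sq_nonneg z2]
  have h1 := abs_le.1 hz1
  refine ⟨Real.sqrt ((1 + z1) / 2), (if 0 ≤ z2 then (1 : ℝ) else -1) * Real.sqrt ((1 - z1) / 2),
    ?_, ?_, ?_⟩
  · rw [mul_pow, Real.sq_sqrt (by linarith), Real.sq_sqrt (by linarith)]
    split_ifs <;> ring
  · rw [mul_pow, Real.sq_sqrt (by linarith), Real.sq_sqrt (by linarith)]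
    split_ifs <;> ring
  · have hsqprod : Real.sqrt ((1 + z1) / 2) * Real.sqrt ((1 - z1) / 2) = |z2| / 2 := by
      rw [← Real.sqrt_mul (by linarith)]
      have h2 : (1 + z1) / 2 * ((1 - z1) / 2) = (z2 / 2) ^ 2 := by nlinarith
      rw [h2, Real.sqrt_sq_eq_abs, abs_div]
      simp
    split_ifs with hsgn
    · rw [one_mul, mul_assoc, hsqprod, abs_of_nonneg hsgn]
      ring
    · push_neg at hsgn
      have : 2 * Real.sqrt ((1 + z1) / 2) * (-1 * Real.sqrt ((1 - z1) / 2))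
          = -(2 * (Real.sqrt ((1 + z1) / 2) * Real.sqrt ((1 - z1) / 2))) := by ring
      rw [this, hsqprod, abs_of_neg hsgn]
      ring

/-- Near-solutions of `b*z1 - a*z2 = t` on the unit circle are close to one of two points. -/
lemma planar_cover (r a b t G z1 z2 e : ℝ) (hr0 : 0 < r) (hr1 : r < 1)
    (hab : a ^ 2 + b ^ 2 = 1) (ht1 : |t| ≤ 1) (hG : G ^ 2 = 1 - t ^ 2) (hG0 : 0 ≤ G)
    (hGr : r ≤ G ^ 2) (hz : z1 ^ 2 + z2 ^ 2 = 1) (he : b * z1 - a * z2 - t = e)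
    (he1 : |e| ≤ 1) :
    ∃ σ : ℝ, σ ^ 2 = 1 ∧
      (z1 - (t * b + σ * G * a)) ^ 2 + (z2 - (-(t * a) + σ * G * b)) ^ 2 ≤ 10 * e ^ 2 / r := by
  obtain ⟨c, hc_def⟩ : ∃ c : ℝ, c = a * z1 + b * z2 := ⟨_, rfl⟩
  have hte : t + e = b * z1 - a * z2 := by linarith
  have hc1 : (t + e) ^ 2 + c ^ 2 = 1 := by
    rw [hte, hc_def]
    linear_combination (z1 ^ 2 + z2 ^ 2) * hab + hz
  obtain ⟨σ, hσ2, hσc⟩ : ∃ σ : ℝ, σ ^ 2 = 1 ∧ σ * c = |c| := by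
    rcases le_or_gt 0 c with h | h
    · exact ⟨1, by norm_num, by rw [abs_of_nonneg h]; ring⟩
    · exact ⟨-1, by norm_num, by rw [abs_of_neg h]; ring⟩
  refine ⟨σ, hσ2, ?_⟩
  have hz1r : z1 = (t + e) * b + c * a := by
    rw [hte, hc_def]; linear_combination (-z1) * hab
  have hz2r : z2 = -((t + e) * a) + c * b := by
    rw [hte, hc_def]; linear_combination (-z2) * hab
  have hD : (z1 - (t * b + σ * G * a)) ^ 2 + (z2 - (-(t * a) + σ * G * b)) ^ 2
      = e ^ 2 + (c - σ * G) ^ 2 := by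
    rw [hz1r, hz2r]
    linear_combination (e ^ 2 + (c - σ * G) ^ 2) * hab
  rw [hD]
  have hc2 : |c| ^ 2 = c ^ 2 := sq_abs c
  have habs : (c - σ * G) ^ 2 = (|c| - G) ^ 2 := by
    linear_combination (-(2 * G)) * hσc + G ^ 2 * hσ2 - hc2
  have h1 : c ^ 2 - G ^ 2 = -(e * (2 * t + e)) := by
    rw [hG]; linear_combination hc1
  have hprod : ((|c| - G) * (|c| + G)) ^ 2 = (e * (2 * t + e)) ^ 2 := by
    calc ((|c| - G) * (|c| + G)) ^ 2 = (|c| ^ 2 - G ^ 2) ^ 2 := by ring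
      _ = (c ^ 2 - G ^ 2) ^ 2 := by rw [hc2]
      _ = (e * (2 * t + e)) ^ 2 := by rw [h1]; ring
  have hden : r ≤ (|c| + G) ^ 2 := by
    calc r ≤ G ^ 2 := hGr
      _ ≤ (|c| + G) ^ 2 :=
        pow_le_pow_left₀ hG0 (le_add_of_nonneg_left (abs_nonneg c)) 2
  have h3 : (2 * t + e) ^ 2 ≤ 9 := by
    have h1t := abs_le.1 ht1; have h2e := abs_le.1 he1
    nlinarith
  have hnum : (e * (2 * t + e)) ^ 2 ≤ 9 * e ^ 2 := by
    calc (e * (2 * t + e)) ^ 2 = e ^ 2 * (2 * t + e) ^ 2 := by ring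
      _ ≤ e ^ 2 * 9 := mul_le_mul_of_nonneg_left h3 (sq_nonneg e)
      _ = 9 * e ^ 2 := by ring
  have hfin : (|c| - G) ^ 2 * r ≤ 9 * e ^ 2 := by
    calc (|c| - G) ^ 2 * r ≤ (|c| - G) ^ 2 * (|c| + G) ^ 2 :=
          mul_le_mul_of_nonneg_left hden (sq_nonneg _)
      _ = ((|c| - G) * (|c| + G)) ^ 2 := by ring
      _ = (e * (2 * t + e)) ^ 2 := hprod
      _ ≤ 9 * e ^ 2 := hnum
  have h6 : e ^ 2 * r ≤ e ^ 2 := mul_le_of_le_one_right (sq_nonneg e) hr1.le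
  rw [habs, le_div_iff₀ hr0]
  have hexp : (e ^ 2 + (|c| - G) ^ 2) * r = e ^ 2 * r + (|c| - G) ^ 2 * r := by ring
  rw [hexp]
  linarith

lemma min_of_two (A B D2 : ℝ) (hA : 0 ≤ A) (hB : 0 ≤ B) (hprod : A * B = D2)
    (hsum : A + B = 4) : min A B ≤ D2 := by
  rcases le_total A B with h | h
  · have hB2 : 1 ≤ B := by linarith
    calc min A B ≤ A := min_le_left A B
      _ ≤ A * B := le_mul_of_one_le_right hA hB2
      _ = D2 := hprod
  · have hA2 : 1 ≤ A := by linarith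
    calc min A B ≤ B := min_le_right A B
      _ ≤ A * B := le_mul_of_one_le_left hB hA2
      _ = D2 := hprod

lemma final_step (x y τ α' β' m α β e r ε sr : ℝ) (hxy : x ^ 2 + y ^ 2 = 1) (hτ2 : τ ^ 2 = 1)
    (hτ : (α' - τ * x) ^ 2 + (β' - τ * y) ^ 2 ≤ 10 * e ^ 2 / r) (hαm : α = m * α')
    (hβm : β = m * β') (hm1 : |m| ≤ 1) (he4 : |e| ≤ 4 * ε) (hε0 : 0 ≤ ε) (hr0 : 0 < r)
    (hsr : 0 < sr) (hsr2 : sr ^ 2 = r) :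
    |(-y) * α + x * β| ≤ 16 / sr * ε := by
  have hval : (-y) * α + x * β = m * ((-y) * α' + x * β') := by rw [hαm, hβm]; ring
  have h11 : ((-y) * α' + x * β') ^ 2 ≤ (α' - τ * x) ^ 2 + (β' - τ * y) ^ 2 := by
    nlinarith [sq_nonneg (x * (α' - τ * x) + y * (β' - τ * y)), hxy, hτ2,
      sq_nonneg (α' - τ * x), sq_nonneg (β' - τ * y)]
  have he2 : e ^ 2 ≤ 16 * ε ^ 2 := by nlinarith [sq_abs e, abs_nonneg e]
  have hW2 : (16 / sr * ε) ^ 2 = 256 * ε ^ 2 / r := by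
    rw [mul_pow, div_pow, hsr2]; ring
  have hval2 : ((-y) * α + x * β) ^ 2 ≤ (16 / sr * ε) ^ 2 := by
    rw [hval, hW2, mul_pow]
    have hm2 : m ^ 2 ≤ 1 := by nlinarith [sq_abs m, abs_nonneg m]
    calc m ^ 2 * ((-y) * α' + x * β') ^ 2 ≤ 1 * ((-y) * α' + x * β') ^ 2 :=
          mul_le_mul_of_nonneg_right hm2 (sq_nonneg _)
      _ = ((-y) * α' + x * β') ^ 2 := one_mul _
      _ ≤ 10 * e ^ 2 / r := le_trans h11 hτ
      _ ≤ 256 * ε ^ 2 / r := by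
          rw [div_le_div_iff_of_pos_right hr0]
          nlinarith
  have hW2nn : 0 ≤ 16 / sr * ε := by positivity
  have h := Real.sqrt_le_sqrt hval2
  rwa [Real.sqrt_sq_eq_abs, Real.sqrt_sq hW2nn] at h

set_option maxHeartbeats 1000000 in
lemma membership_step (d : ℕ) (r δ ε sr : ℝ) (hr0 : 0 < r) (hr1 : r < 1) (hδ : 0 < δ)
    (hδhalf : δ ≤ 1 / 2) (hεsq : ε ^ 2 = 2 * δ) (hε : 0 < ε) (hεr : ε ≤ r / 8)
    (hsr : 0 < sr) (hsr2 : sr ^ 2 = r)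
    (u p q : EuclideanSpace ℝ (Fin d)) (hu : ‖u‖ = 1) (hp : ‖p‖ = 1) (hq : ‖q‖ = 1)
    (hpq : ⟪p, q⟫ = 0) (a b : ℝ) (ha : ⟪u, p⟫ = a) (huq : u = a • p + b • q) (hb0 : 0 ≤ b)
    (hab : a ^ 2 + b ^ 2 = 1)
    (t G : ℝ) (ht' : (1 + r) * t = -(b * (1 - r))) (hG2 : G ^ 2 = 1 - t ^ 2) (hG0 : 0 ≤ G)
    (x1 y1 xm ym : ℝ) (hxy1 : x1 ^ 2 + y1 ^ 2 = 1)
    (hd1 : x1 ^ 2 - y1 ^ 2 = t * b + 1 * G * a) (h2xy1 : 2 * x1 * y1 = -(t * a) + 1 * G * b)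
    (hxym : xm ^ 2 + ym ^ 2 = 1)
    (hdm : xm ^ 2 - ym ^ 2 = t * b + -1 * G * a) (h2xym : 2 * xm * ym = -(t * a) + -1 * G * b)
    (ω : EuclideanSpace ℝ (Fin d)) (hω : ‖ω‖ = 1) (c : ℝ) (hc : 0 < c)
    (hbadfull : 1 - |⟪‖c • (u - ((1 + r) * ⟪u, ω⟫) • ω)‖⁻¹ •
      (c • (u - ((1 + r) * ⟪u, ω⟫) • ω)), p⟫| ≤ δ) :
    |⟪u, ω⟫| ≤ 2 * ε ∨ |⟪(-y1) • p + x1 • q, ω⟫| ≤ 16 / sr * ε ∨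
      |⟪(-ym) • p + xm • q, ω⟫| ≤ 16 / sr * ε := by
  have h1r : (0 : ℝ) < 1 + r := by linarith only [hr0]
  obtain ⟨s, hs_def⟩ : ∃ s : ℝ, ⟪u, ω⟫ = s := ⟨_, rfl⟩
  obtain ⟨α, hα_def⟩ : ∃ α : ℝ, ⟪p, ω⟫ = α := ⟨_, rfl⟩
  obtain ⟨β, hβ_def⟩ : ∃ β : ℝ, ⟪q, ω⟫ = β := ⟨_, rfl⟩
  obtain ⟨k, hk_def⟩ : ∃ k : EuclideanSpace ℝ (Fin d), k = u - ((1 + r) * s) • ω := ⟨_, rfl⟩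
  have hs1 : |s| ≤ 1 := by
    rw [← hs_def]
    calc |⟪u, ω⟫| ≤ ‖u‖ * ‖ω‖ := abs_real_inner_le_norm u ω
      _ = 1 := by rw [hu, hω]; ring
  have hs2 : s ^ 2 ≤ 1 := by nlinarith only [hs1, sq_abs s, abs_nonneg s]
  have hβ1 : |β| ≤ 1 := by
    rw [← hβ_def]
    calc |⟪q, ω⟫| ≤ ‖q‖ * ‖ω‖ := abs_real_inner_le_norm q ω
      _ = 1 := by rw [hq, hω]; ring
  have hsab : s = a * α + b * β := by
    rw [← hs_def, ← hα_def, ← hβ_def, huq, inner_add_left, real_inner_smul_left,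
      real_inner_smul_left]
  -- norm of k
  have hk2 : ‖k‖ ^ 2 = 1 - (1 - r ^ 2) * s ^ 2 := by
    rw [hk_def, norm_sub_sq_real, real_inner_smul_right, hs_def, norm_smul, hu, hω,
      Real.norm_eq_abs, mul_one, sq_abs]
    ring
  have h1mr : (0:ℝ) ≤ 1 - r ^ 2 := by nlinarith only [hr0, hr1]
  have hkle : ‖k‖ ^ 2 ≤ 1 := by linarith only [hk2, mul_nonneg h1mr (sq_nonneg s)]
  have hkge : r ^ 2 ≤ ‖k‖ ^ 2 := by
    linarith only [hk2, mul_le_mul_of_nonneg_left hs2 h1mr]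
  have hkpos : 0 < ‖k‖ := by
    rcases (norm_nonneg k).lt_or_eq with h | h
    · exact h
    · exfalso; rw [← h] at hkge; nlinarith only [hkge, hr0]
  -- projections
  obtain ⟨P0, hP0_def⟩ : ∃ P0 : ℝ, ⟪k, p⟫ = P0 := ⟨_, rfl⟩
  obtain ⟨X, hX_def⟩ : ∃ X : ℝ, ⟪k, q⟫ = X := ⟨_, rfl⟩
  have hub : ⟪u, q⟫ = b := by
    rw [huq, inner_add_left, real_inner_smul_left, real_inner_smul_left, hpq,
      real_inner_self_eq_norm_sq, hq]
    ring
  have hP0 : P0 = a - (1 + r) * s * α := by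
    rw [← hP0_def, hk_def, inner_sub_left, real_inner_smul_left, ha,
      show ⟪ω, p⟫ = α from (real_inner_comm p ω).trans hα_def]
  have hX : X = b - (1 + r) * s * β := by
    rw [← hX_def, hk_def, inner_sub_left, real_inner_smul_left, hub,
      show ⟪ω, q⟫ = β from (real_inner_comm q ω).trans hβ_def]
  -- badness
  have hbadk : (1 - δ) * ‖k‖ ≤ |P0| := by
    have hkd2 : k = u - ((1 + r) * ⟪u, ω⟫) • ω := by rw [hk_def, hs_def]
    rw [← hkd2] at hbadfull
    rw [norm_smul, Real.norm_eq_abs, abs_of_pos hc, real_inner_smul_left, real_inner_smul_left,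
      hP0_def] at hbadfull
    have hval : (c * ‖k‖)⁻¹ * (c * P0) = ‖k‖⁻¹ * P0 := by
      rw [mul_inv]
      field_simp
    rw [hval, abs_mul, abs_of_nonneg (inv_nonneg.2 (norm_nonneg k))] at hbadfull
    have h1 : 1 - δ ≤ ‖k‖⁻¹ * |P0| := by linarith only [hbadfull]
    calc (1 - δ) * ‖k‖ ≤ (‖k‖⁻¹ * |P0|) * ‖k‖ := mul_le_mul_of_nonneg_right h1 (norm_nonneg k)
      _ = |P0| := by field_simp
  have hbad' : (1 - δ) ^ 2 * ‖k‖ ^ 2 ≤ P0 ^ 2 := by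
    have h0 : 0 ≤ 1 - δ := by linarith only [hδhalf]
    have h2 := mul_self_le_mul_self (mul_nonneg h0 (norm_nonneg k)) hbadk
    nlinarith only [h2, sq_abs P0]
  -- out of plane part
  obtain ⟨w, hw_def⟩ : ∃ w : EuclideanSpace ℝ (Fin d), w = ω - α • p - β • q := ⟨_, rfl⟩
  have hplane : k - (P0 • p + X • q) = (-((1 + r) * s)) • w := by
    rw [hk_def, hP0, hX, hw_def, huq]
    module
  have hwnorm : ‖w‖ ^ 2 = 1 - α ^ 2 - β ^ 2 := by
    have h1 : w = ω - (α • p + β • q) := by rw [hw_def, sub_sub]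
    rw [h1, norm_sub_sq_real, orth_norm_sq d p q hp hq hpq, hω, inner_add_right,
      real_inner_smul_right, real_inner_smul_right,
      show ⟪ω, p⟫ = α from (real_inner_comm p ω).trans hα_def,
      show ⟪ω, q⟫ = β from (real_inner_comm q ω).trans hβ_def]
    ring
  have hpyth : ‖k‖ ^ 2 = P0 ^ 2 + X ^ 2 + ((1 + r) * s) ^ 2 * ‖w‖ ^ 2 := by
    have h1 : ‖k - (P0 • p + X • q)‖ ^ 2
        = ‖k‖ ^ 2 - 2 * ⟪k, P0 • p + X • q⟫ + ‖P0 • p + X • q‖ ^ 2 := norm_sub_sq_real _ _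
    rw [inner_add_right, real_inner_smul_right, real_inner_smul_right, hP0_def, hX_def,
      orth_norm_sq d p q hp hq hpq, hplane, norm_smul, Real.norm_eq_abs, mul_pow, sq_abs] at h1
    linarith only [h1]
  have hkey : X ^ 2 + ((1 + r) * s) ^ 2 * ‖w‖ ^ 2 ≤ 2 * δ := by
    have h5 : X ^ 2 + ((1 + r) * s) ^ 2 * ‖w‖ ^ 2 = ‖k‖ ^ 2 - P0 ^ 2 := by linarith
    have h6 : ‖k‖ ^ 2 - P0 ^ 2 ≤ ‖k‖ ^ 2 * (2 * δ - δ ^ 2) := by nlinarith only [hbad']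
    have h7 : ‖k‖ ^ 2 * (2 * δ - δ ^ 2) ≤ 2 * δ := by
      have h8 : (0 : ℝ) ≤ 2 * δ - δ ^ 2 := by nlinarith only [hδ, hδhalf]
      linarith only [mul_le_of_le_one_left h8 hkle, sq_nonneg δ]
    linarith
  have hXe : |X| ≤ ε := by
    have h1 : X ^ 2 ≤ ε ^ 2 := by
      linarith only [hkey, hεsq, mul_nonneg (sq_nonneg ((1 + r) * s)) (sq_nonneg (‖w‖ : ℝ))]
    have h2 := Real.sqrt_le_sqrt h1
    rwa [Real.sqrt_sq_eq_abs, Real.sqrt_sq hε.le] at h2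
  have hZe : (1 + r) * |s| * ‖w‖ ≤ ε := by
    have h1 : ((1 + r) * |s| * ‖w‖) ^ 2 ≤ ε ^ 2 := by
      have : ((1 + r) * |s| * ‖w‖) ^ 2 = ((1 + r) * s) ^ 2 * ‖w‖ ^ 2 := by
        rw [mul_pow, mul_pow, sq_abs, mul_pow]
      rw [this]
      linarith only [hkey, hεsq, sq_nonneg X]
    have h2 := Real.sqrt_le_sqrt h1
    rwa [Real.sqrt_sq (by positivity), Real.sqrt_sq hε.le] at h2
  by_cases hcase : |s| ≤ 2 * ε
  · left; rw [hs_def]; exact hcase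
  · right
    push_neg at hcase
    have h8 : |s| * ‖w‖ ≤ ε := by
      calc |s| * ‖w‖ ≤ (1 + r) * |s| * ‖w‖ := by
            nlinarith only [mul_nonneg hr0.le (mul_nonneg (abs_nonneg s) (norm_nonneg w))]
        _ ≤ ε := hZe
    have hw12 : ‖w‖ ≤ 1 / 2 := by
      nlinarith only [mul_le_mul_of_nonneg_right hcase.le (norm_nonneg w), hε, h8]
    have hwnn : 0 ≤ ‖w‖ := norm_nonneg w
    -- in-plane unit vector
    obtain ⟨m, hm_def⟩ : ∃ m : ℝ, m = Real.sqrt (α ^ 2 + β ^ 2) := ⟨_, rfl⟩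
    have hm2 : m ^ 2 = α ^ 2 + β ^ 2 := by
      rw [hm_def]; exact Real.sq_sqrt (by positivity)
    have hm2w : m ^ 2 = 1 - ‖w‖ ^ 2 := by rw [hm2]; linarith
    have hm34 : 3 / 4 ≤ m ^ 2 := by nlinarith only [hm2w, hw12, norm_nonneg w]
    have hmle : m ^ 2 ≤ 1 := by nlinarith only [hm2w, sq_nonneg (‖w‖ : ℝ)]
    have hmpos : 0 < m := by
      rw [hm_def]; apply Real.sqrt_pos.2; linarith only [hm2, hm34]
    have hm1 : |m| ≤ 1 := by
      rw [abs_of_pos hmpos]; nlinarith only [hmle, hmpos]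
    obtain ⟨α', hα'_def⟩ : ∃ α' : ℝ, α' = α / m := ⟨_, rfl⟩
    obtain ⟨β', hβ'_def⟩ : ∃ β' : ℝ, β' = β / m := ⟨_, rfl⟩
    have hαm : α = m * α' := by rw [hα'_def]; field_simp
    have hβm : β = m * β' := by rw [hβ'_def]; field_simp
    have hunit' : α' ^ 2 + β' ^ 2 = 1 := by
      have h1 : α' ^ 2 + β' ^ 2 = (α ^ 2 + β ^ 2) / m ^ 2 := by
        rw [hα'_def, hβ'_def]; ring
      rw [h1, ← hm2]
      exact div_self (by positivity)
    -- the planar quantity g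
    obtain ⟨g, hg_def⟩ : ∃ g : ℝ, g = b - (1 + r) * (a * α' + b * β') * β' := ⟨_, rfl⟩
    have hgA : g = b - (1 + r) * s * β / m ^ 2 := by
      rw [hg_def, hα'_def, hβ'_def, hsab]
      field_simp
    have hgX : g - X = -((1 + r) * s * β * ‖w‖ ^ 2 / m ^ 2) := by
      rw [hgA, hX]
      rw [(show ‖w‖ ^ 2 = 1 - m ^ 2 by linarith)]
      field_simp
      ring
    have hgXabs : |g - X| ≤ 2 / 3 * ε := by
      rw [hgX, abs_neg, abs_div, abs_of_pos (show (0:ℝ) < m ^ 2 by positivity)]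
      rw [div_le_iff₀ (show (0:ℝ) < m ^ 2 by positivity)]
      have hexp : |(1 + r) * s * β * ‖w‖ ^ 2| = ((1 + r) * |s| * ‖w‖) * (|β| * ‖w‖) := by
        rw [abs_mul, abs_mul, abs_mul, abs_of_pos h1r, abs_of_nonneg (sq_nonneg (‖w‖ : ℝ))]
        ring
      rw [hexp]
      have h10 : |β| * ‖w‖ ≤ 1 / 2 := by
        nlinarith only [hβ1, hw12, abs_nonneg β, norm_nonneg w]
      calc ((1 + r) * |s| * ‖w‖) * (|β| * ‖w‖) ≤ ε * (1 / 2) :=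
            mul_le_mul hZe h10 (by positivity) hε.le
        _ ≤ 2 / 3 * ε * (3 / 4) := by linarith only [hε]
        _ ≤ 2 / 3 * ε * m ^ 2 := mul_le_mul_of_nonneg_left hm34 (by positivity)
    have hg2ε : |g| ≤ 2 * ε := by
      have : g = X + (g - X) := by ring
      rw [this]
      calc |X + (g - X)| ≤ |X| + |g - X| := abs_add_le _ _
        _ ≤ ε + 2 / 3 * ε := add_le_add hXe hgXabs
        _ ≤ 2 * ε := by linarith only [hε]
    -- planar setup
    obtain ⟨z1, hz1_def⟩ : ∃ z1 : ℝ, z1 = α' ^ 2 - β' ^ 2 := ⟨_, rfl⟩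
    obtain ⟨z2, hz2_def⟩ : ∃ z2 : ℝ, z2 = 2 * α' * β' := ⟨_, rfl⟩
    have hzunit : z1 ^ 2 + z2 ^ 2 = 1 := by
      rw [hz1_def, hz2_def]
      linear_combination (α' ^ 2 + β' ^ 2 + 1) * hunit'
    obtain ⟨e, he_def⟩ : ∃ e : ℝ, e = b * z1 - a * z2 - t := ⟨_, rfl⟩
    have hge : (1 + r) * e = 2 * g := by
      rw [he_def, hg_def, hz1_def, hz2_def]
      linear_combination ((1 + r) * b) * hunit' - ht'
    have heabs : (1 + r) * |e| = 2 * |g| := by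
      have h1 := congrArg abs hge
      rwa [abs_mul, abs_mul, abs_of_pos h1r, abs_of_pos (show (0:ℝ) < 2 by norm_num)] at h1
    have he4 : |e| ≤ 4 * ε := by
      nlinarith only [heabs, hg2ε, mul_nonneg hr0.le (abs_nonneg e)]
    have he1 : |e| ≤ 1 := by linarith only [he4, hεr, hr1, hr0]
    -- |t| and G bounds
    have hb2 : b ^ 2 ≤ 1 := by linarith only [hab, sq_nonneg a]
    have hb1 : b ≤ 1 := by nlinarith only [hb2, hb0]
    have htb : (1 + r) * |t| = b * (1 - r) := by
      have h1 := congrArg abs ht'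
      have h1mr' : (0:ℝ) ≤ 1 - r := by linarith only [hr1]
      rwa [abs_mul, abs_neg, abs_mul, abs_of_pos h1r, abs_of_nonneg hb0,
        abs_of_nonneg h1mr'] at h1
    have ht1 : |t| ≤ 1 := by
      have hbr : b * (1 - r) ≤ 1 := mul_le_one₀ hb1 (by linarith only [hr0, hr1]) (by linarith only [hr0, hr1])
      nlinarith only [htb, hbr, hr0, abs_nonneg t]
    have ht2' : ((1 + r) * t) ^ 2 = (b * (1 - r)) ^ 2 := by rw [ht']; ring
    have hGr : r ≤ G ^ 2 := by
      rw [hG2]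
      nlinarith only [ht2', mul_le_mul_of_nonneg_right hb2 (sq_nonneg (1 - r)), hr0, hr1,
        mul_pos h1r h1r, sq_nonneg t,
        mul_nonneg (mul_nonneg hr0.le (by linarith only [hr1] : (0:ℝ) ≤ 1 - r))
          (by linarith only [hr0] : (0:ℝ) ≤ 3 + r)]
    -- apply planar cover
    obtain ⟨σ, hσ2, hclose⟩ := planar_cover r a b t G z1 z2 e hr0 hr1 hab ht1 hG2 hG0 hGr
      hzunit (by rw [he_def]) he1
    -- choose the sign
    have hσcases : σ = 1 ∨ σ = -1 := by
      have h1 : (σ - 1) * (σ + 1) = 0 := by linear_combination hσ2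
      rcases mul_eq_zero.1 h1 with h | h
      · left; linarith only [h]
      · right; linarith only [h]
    -- common final argument
    have main : ∀ x y : ℝ, x ^ 2 + y ^ 2 = 1 → x ^ 2 - y ^ 2 = t * b + σ * G * a →
        2 * x * y = -(t * a) + σ * G * b → |(-y) * α + x * β| ≤ 16 / sr * ε := by
      intro x y hxy hdx h2xy
      have hABprod : ((α' - x) ^ 2 + (β' - y) ^ 2) * ((α' + x) ^ 2 + (β' + y) ^ 2)
          = (z1 - (t * b + σ * G * a)) ^ 2 + (z2 - (-(t * a) + σ * G * b)) ^ 2 := by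
        rw [← hdx, ← h2xy, hz1_def, hz2_def]
        ring
      have hABsum : ((α' - x) ^ 2 + (β' - y) ^ 2) + ((α' + x) ^ 2 + (β' + y) ^ 2) = 4 := by
        linear_combination 2 * hunit' + 2 * hxy
      have hmin := min_of_two _ _ _ (by positivity) (by positivity) hABprod hABsum
      obtain ⟨τ, hτ2, hτ⟩ : ∃ τ : ℝ, τ ^ 2 = 1 ∧
          (α' - τ * x) ^ 2 + (β' - τ * y) ^ 2 ≤ 10 * e ^ 2 / r := by
        rcases le_total ((α' - x) ^ 2 + (β' - y) ^ 2) ((α' + x) ^ 2 + (β' + y) ^ 2) with h | h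
        · refine ⟨1, by norm_num, ?_⟩
          have hmineq : min ((α' - x) ^ 2 + (β' - y) ^ 2) ((α' + x) ^ 2 + (β' + y) ^ 2)
              = (α' - x) ^ 2 + (β' - y) ^ 2 := min_eq_left h
          rw [hmineq] at hmin
          have heq : (α' - (1:ℝ) * x) ^ 2 + (β' - (1:ℝ) * y) ^ 2
              = (α' - x) ^ 2 + (β' - y) ^ 2 := by ring
          rw [heq]
          exact le_trans hmin hclose
        · refine ⟨-1, by norm_num, ?_⟩
          have hmineq : min ((α' - x) ^ 2 + (β' - y) ^ 2) ((α' + x) ^ 2 + (β' + y) ^ 2)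
              = (α' + x) ^ 2 + (β' + y) ^ 2 := min_eq_right h
          rw [hmineq] at hmin
          have heq : (α' - (-1:ℝ) * x) ^ 2 + (β' - (-1:ℝ) * y) ^ 2
              = (α' + x) ^ 2 + (β' + y) ^ 2 := by ring
          rw [heq]
          exact le_trans hmin hclose
      exact final_step x y τ α' β' m α β e r ε sr hxy hτ2 hτ hαm hβm hm1 he4 hε.le hr0 hsr hsr2
    have hinner : ∀ x y : ℝ, ⟪(-y) • p + x • q, ω⟫ = (-y) * α + x * β := by
      intro x y
      rw [inner_add_left, real_inner_smul_left, real_inner_smul_left, hα_def, hβ_def]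
    rcases hσcases with hσ | hσ
    · left
      rw [hinner x1 y1]
      exact main x1 y1 hxy1 (by rw [← hσ] at hd1; exact hd1) (by rw [← hσ] at h2xy1; exact h2xy1)
    · right
      rw [hinner xm ym]
      exact main xm ym hxym (by rw [← hσ] at hdm; exact hdm) (by rw [← hσ] at h2xym; exact h2xym)


lemma slab_measurable (d : ℕ) (e : EuclideanSpace ℝ (Fin d)) (w : ℝ) :
    MeasurableSet {ω : sphere (0 : EuclideanSpace ℝ (Fin d)) 1 |
        |⟪e, (ω : EuclideanSpace ℝ (Fin d))⟫| ≤ w} := by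
  have hclosed : IsClosed {x : EuclideanSpace ℝ (Fin d) | |⟪e, x⟫| ≤ w} :=
    isClosed_le (Continuous.abs (continuous_const.inner continuous_id)) continuous_const
  exact hclosed.measurableSet.preimage measurable_subtype_coe

set_option maxHeartbeats 1000000 in
/-- Almost colinearity after scattering: there are constants `δ₀, C > 0` depending only on `d`
and `r` such that, for every `v ≠ 0`, every unit vector `p`, and every `0 < δ ≤ δ₀`, the set of
angular parameters `ω ∈ S^{d−1}` for which `1 − |⟪κ_ω(v)/‖κ_ω(v)‖, p⟫| ≤ δ` is contained in a
measurable set of spherical measure at most `C·δ^(1/2)`. -/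
theorem almost_colinearity_after_scattering (d : ℕ) (hd : 2 ≤ d) (r : ℝ)
    (hr : r ∈ Set.Ioo (0 : ℝ) 1) :
    ∃ δ₀ : ℝ, 0 < δ₀ ∧ ∃ C : ℝ, 0 < C ∧
      ∀ v : EuclideanSpace ℝ (Fin d), v ≠ 0 →
      ∀ p : EuclideanSpace ℝ (Fin d), ‖p‖ = 1 →
      ∀ δ : ℝ, 0 < δ → δ ≤ δ₀ →
        ∃ P : Set (sphere (0 : EuclideanSpace ℝ (Fin d)) 1), MeasurableSet P ∧
          sphereSurfaceMeasure d P ≤ ENNReal.ofReal (C * δ ^ ((1 : ℝ) / 2)) ∧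
          ∀ ω : sphere (0 : EuclideanSpace ℝ (Fin d)) 1,
            1 - |⟪‖inelasticScatter d r (ω : EuclideanSpace ℝ (Fin d)) v‖⁻¹ •
                  inelasticScatter d r (ω : EuclideanSpace ℝ (Fin d)) v, p⟫| ≤ δ → ω ∈ P := by
  obtain ⟨hr0, hr1⟩ := hr
  have hd0 : 0 < d := by omega
  have hsr : 0 < Real.sqrt r := Real.sqrt_pos.2 hr0
  have hsr2 : Real.sqrt r ^ 2 = r := Real.sq_sqrt hr0.le
  refine ⟨r ^ 2 / 128, by positivity,
    (d : ℝ) * 2 ^ d * (2 + 32 / Real.sqrt r) * Real.sqrt 2, by positivity, ?_⟩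
  intro v hv p hp δ hδ hδ₀
  have hδhalf : δ ≤ 1 / 2 := by nlinarith only [hδ₀, hr0, hr1]
  obtain ⟨ε, hε_def⟩ : ∃ ε : ℝ, ε = Real.sqrt (2 * δ) := ⟨_, rfl⟩
  have hε : 0 < ε := by rw [hε_def]; exact Real.sqrt_pos.2 (by linarith only [hδ])
  have hεsq : ε ^ 2 = 2 * δ := by rw [hε_def]; exact Real.sq_sqrt (by linarith only [hδ])
  have hεr : ε ≤ r / 8 := by
    have h1 : ε ≤ Real.sqrt (2 * (r ^ 2 / 128)) := by
      rw [hε_def]; exact Real.sqrt_le_sqrt (by nlinarith only [hδ₀])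
    have h2 : Real.sqrt (2 * (r ^ 2 / 128)) = r / 8 := by
      rw [show 2 * (r ^ 2 / 128) = (r / 8) ^ 2 by ring]
      exact Real.sqrt_sq (by positivity)
    linarith only [h1, h2]
  -- decomposition of the incoming direction
  obtain ⟨nv, hnv⟩ : ∃ nv : ℝ, ‖v‖ = nv := ⟨_, rfl⟩
  have hnv0 : 0 < nv := by rw [← hnv]; exact norm_pos_iff.2 hv
  obtain ⟨u, hu, hvu⟩ : ∃ u : EuclideanSpace ℝ (Fin d), ‖u‖ = 1 ∧ v = nv • u :=
    ⟨‖v‖⁻¹ • v, norm_smul_inv_norm hv,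
      by rw [← hnv, smul_inv_smul₀ (by rw [hnv]; exact hnv0.ne')]⟩
  obtain ⟨q, b, hq, hb0, hpq, huq, hab⟩ := exists_orth_decomp d hd u p hu hp
  obtain ⟨a, ha⟩ : ∃ a : ℝ, ⟪u, p⟫ = a := ⟨_, rfl⟩
  rw [ha] at huq hab
  -- planar constants
  have h1r : (0 : ℝ) < 1 + r := by linarith only [hr0]
  obtain ⟨t, ht'⟩ : ∃ t : ℝ, (1 + r) * t = -(b * (1 - r)) :=
    ⟨-(b * (1 - r)) / (1 + r), by field_simp⟩
  have hb2 : b ^ 2 ≤ 1 := by nlinarith only [hab, sq_nonneg a]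
  have ht2 : 0 ≤ 1 - t ^ 2 := by
    have ht2' : ((1 + r) * t) ^ 2 = (b * (1 - r)) ^ 2 := by rw [ht']; ring
    nlinarith only [ht2', mul_le_mul_of_nonneg_right hb2 (sq_nonneg (1 - r)), hr0, hr1,
      mul_pos h1r h1r, sq_nonneg t]
  obtain ⟨G, hG_def⟩ : ∃ G : ℝ, G = Real.sqrt (1 - t ^ 2) := ⟨_, rfl⟩
  have hG2 : G ^ 2 = 1 - t ^ 2 := by rw [hG_def]; exact Real.sq_sqrt ht2
  have hG0 : 0 ≤ G := by rw [hG_def]; exact Real.sqrt_nonneg _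
  have hzs1unit : (t * b + 1 * G * a) ^ 2 + (-(t * a) + 1 * G * b) ^ 2 = 1 := by
    linear_combination (t ^ 2 + G ^ 2) * hab + hG2
  have hzsmunit : (t * b + -1 * G * a) ^ 2 + (-(t * a) + -1 * G * b) ^ 2 = 1 := by
    linear_combination (t ^ 2 + G ^ 2) * hab + hG2
  obtain ⟨x1, y1, hxy1, hd1, h2xy1⟩ := exists_circle_sqrt _ _ hzs1unit
  obtain ⟨xm, ym, hxym, hdm, h2xym⟩ := exists_circle_sqrt _ _ hzsmunit
  -- unit normal directions of the two slabs
  have hn1 : ‖(-y1) • p + x1 • q‖ = 1 := by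
    have h1 : ‖(-y1) • p + x1 • q‖ ^ 2 = 1 := by
      rw [orth_norm_sq d p q hp hq hpq]; linear_combination hxy1
    calc ‖(-y1) • p + x1 • q‖ = Real.sqrt (‖(-y1) • p + x1 • q‖ ^ 2) :=
          (Real.sqrt_sq (norm_nonneg _)).symm
      _ = 1 := by rw [h1, Real.sqrt_one]
  have hnm : ‖(-ym) • p + xm • q‖ = 1 := by
    have h1 : ‖(-ym) • p + xm • q‖ ^ 2 = 1 := by
      rw [orth_norm_sq d p q hp hq hpq]; linear_combination hxym
    calc ‖(-ym) • p + xm • q‖ = Real.sqrt (‖(-ym) • p + xm • q‖ ^ 2) :=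
          (Real.sqrt_sq (norm_nonneg _)).symm
      _ = 1 := by rw [h1, Real.sqrt_one]
  refine ⟨{ω : sphere (0 : EuclideanSpace ℝ (Fin d)) 1 |
      |⟪u, (ω : EuclideanSpace ℝ (Fin d))⟫| ≤ 2 * ε} ∪
    {ω : sphere (0 : EuclideanSpace ℝ (Fin d)) 1 |
      |⟪(-y1) • p + x1 • q, (ω : EuclideanSpace ℝ (Fin d))⟫| ≤ 16 / Real.sqrt r * ε} ∪
    {ω : sphere (0 : EuclideanSpace ℝ (Fin d)) 1 |
      |⟪(-ym) • p + xm • q, (ω : EuclideanSpace ℝ (Fin d))⟫| ≤ 16 / Real.sqrt r * ε},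
    ?_, ?_, ?_⟩
  · exact ((slab_measurable d u (2 * ε)).union
      (slab_measurable d ((-y1) • p + x1 • q) (16 / Real.sqrt r * ε))).union
      (slab_measurable d ((-ym) • p + xm • q) (16 / Real.sqrt r * ε))
  · -- measure bound
    have hW1 : (0 : ℝ) ≤ 2 * ε := by positivity
    have hW2 : (0 : ℝ) ≤ 16 / Real.sqrt r * ε := by positivity
    have hb1m := slab_measure_bound d hd0 u hu (2 * ε) hW1
    have hb2m := slab_measure_bound d hd0 _ hn1 (16 / Real.sqrt r * ε) hW2
    have hb3m := slab_measure_bound d hd0 _ hnm (16 / Real.sqrt r * ε) hW2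
    refine le_trans (le_trans (measure_union_le _ _)
      (add_le_add (le_trans (measure_union_le _ _) (add_le_add hb1m hb2m)) hb3m)) ?_
    rw [← ENNReal.ofReal_add (by positivity) (by positivity),
      ← ENNReal.ofReal_add (by positivity) (by positivity)]
    apply ENNReal.ofReal_le_ofReal
    have hsd : δ ^ ((1 : ℝ) / 2) = Real.sqrt δ := (Real.sqrt_eq_rpow δ).symm
    have hεδ : ε = Real.sqrt 2 * Real.sqrt δ := by
      rw [hε_def, Real.sqrt_mul (by norm_num)]
    rw [hsd, hεδ]
    ring_nf
    apply le_of_eq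
    field_simp
  · -- membership
    intro ω hbad
    have hω : ‖(ω : EuclideanSpace ℝ (Fin d))‖ = 1 := by
      have := ω.2
      rwa [mem_sphere_zero_iff_norm] at this
    have hκ : inelasticScatter d r (ω : EuclideanSpace ℝ (Fin d)) v
        = nv • (u - ((1 + r) * ⟪u, (ω : EuclideanSpace ℝ (Fin d))⟫) •
            (ω : EuclideanSpace ℝ (Fin d))) := by
      rw [inelasticScatter, hvu, real_inner_smul_left]
      module
    rw [hκ] at hbad
    have hres := membership_step d r δ ε (Real.sqrt r) hr0 hr1 hδ hδhalf hεsq hε hεr hsr hsr2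
      u p q hu hp hq hpq a b ha huq hb0 hab t G ht' hG2 hG0 x1 y1 xm ym hxy1 hd1 h2xy1
      hxym hdm h2xym (ω : EuclideanSpace ℝ (Fin d)) hω nv hnv0 hbad
    rcases hres with h | h | h
    · exact Set.mem_union_left _ (Set.mem_union_left _ h)
    · exact Set.mem_union_left _ (Set.mem_union_right _ h)
    · exact Set.mem_union_right _ h
end
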